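/- Let E be a normed vector space, p > 1, 0 ≤ α < 1, a, b ≥ 0, and x, y ∈ E. Then |a^p‖x‖^α − b^p‖y‖^α| ≤ C·(‖y‖^α·|a−b|·(a^{p−1}+b^{p−1}) + a^p·‖x−y‖^α) for some constant C depending only on p and α. -/

import Mathlib

open Real

private lemma rpow_subadd {α : ℝ} (hα0 : 0 ≤ α) (hα1 : α ≤ 1) {s t : ℝ}
    (hs : 0 ≤ s) (ht : 0 ≤ t) : (s + t) ^ α ≤ s ^ α + t ^ α := by
  have := NNReal.rpow_add_le_add_rpow ⟨s, hs⟩ ⟨t, ht⟩ hα0 hα1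
  have h2 := NNReal.coe_le_coe.2 this
  exact h2

private lemma rpow_abs_sub {α : ℝ} (hα0 : 0 ≤ α) (hα1 : α ≤ 1) {s t : ℝ}
    (hs : 0 ≤ s) (ht : 0 ≤ t) : s ^ α - t ^ α ≤ |s - t| ^ α := by
  have h1 : s ≤ t + |s - t| := by
    rcases abs_cases (s - t) with ⟨h, _⟩ | ⟨h, _⟩ <;> linarith
  have h2 : s ^ α ≤ t ^ α + |s - t| ^ α :=
    (Real.rpow_le_rpow hs h1 hα0).trans (rpow_subadd hα0 hα1 ht (abs_nonneg _))
  linarith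

private lemma rpow_sub_le {p : ℝ} (hp : 1 ≤ p) {a b : ℝ} (hb : 0 ≤ b) (hba : b ≤ a) :
    a ^ p - b ^ p ≤ p * (a - b) * a ^ (p - 1) := by
  have ha : 0 ≤ a := hb.trans hba
  rcases eq_or_lt_of_le ha with h | h
  · have hb0 : b = 0 := le_antisymm (hba.trans h.ge) hb
    simp [← h, hb0, Real.zero_rpow (by linarith : p ≠ 0)]
  · set s := (b - a) / a with hs
    have hs1 : -1 ≤ s := by
      rw [hs, le_div_iff₀ h]; linarith
    have hbern := one_add_mul_self_le_rpow_one_add hs1 hp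
    have h1s : 1 + s = b / a := by rw [hs, one_add_div h.ne']; ring
    have key : (1 + p * s) * a ^ p ≤ b ^ p := by
      have := mul_le_mul_of_nonneg_right hbern (Real.rpow_nonneg ha p : (0:ℝ) ≤ a ^ p)
      calc (1 + p * s) * a ^ p ≤ (1 + s) ^ p * a ^ p := this
        _ = b ^ p := by
            rw [h1s, Real.div_rpow hb ha, div_mul_cancel₀]
            exact (Real.rpow_pos_of_pos h p).ne'
    have hap : a ^ p = a * a ^ (p - 1) := by
      rw [show p = 1 + (p - 1) by ring, Real.rpow_add h, Real.rpow_one]; ring_nf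
    have hsap : s * a ^ p = (b - a) * a ^ (p - 1) := by
      rw [hap, hs]; field_simp
    nlinarith [key]

private lemma rpow_abs_sub_p {p : ℝ} (hp : 1 ≤ p) {a b : ℝ} (ha : 0 ≤ a) (hb : 0 ≤ b) :
    |a ^ p - b ^ p| ≤ p * |a - b| * (a ^ (p - 1) + b ^ (p - 1)) := by
  have hap := Real.rpow_nonneg ha (p - 1)
  have hbp := Real.rpow_nonneg hb (p - 1)
  have hp0 : 0 < p := by linarith
  rcases le_total b a with h | h
  · have h1 := rpow_sub_le hp hb h
    have h2 : 0 ≤ b ^ p - a ^ p + (p * (a - b) * a ^ (p - 1)) := by nlinarith [rpow_sub_le hp hb h]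
    rw [abs_of_nonneg (by linarith : (0:ℝ) ≤ a - b), abs_of_nonneg]
    · nlinarith [mul_nonneg (mul_nonneg hp0.le (by linarith : (0:ℝ) ≤ a - b)) hbp]
    · have := Real.rpow_le_rpow hb h hp0.le
      linarith
  · have h1 := rpow_sub_le hp ha h
    rw [abs_sub_comm, abs_sub_comm a b, abs_of_nonneg (by linarith : (0:ℝ) ≤ b - a), abs_of_nonneg]
    · nlinarith [mul_nonneg (mul_nonneg hp0.le (by linarith : (0:ℝ) ≤ b - a)) hap]
    · have := Real.rpow_le_rpow ha h hp0.le
      linarith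

theorem key_contraction_alpha_lt_one (p α : ℝ) (hp : 1 < p) (hα0 : 0 ≤ α) (hα1 : α < 1) :
    ∃ C : ℝ, 0 < C ∧ ∀ (E : Type) [NormedAddCommGroup E] [NormedSpace ℝ E]
      (a b : ℝ) (x y : E), 0 ≤ a → 0 ≤ b →
      |a ^ p * ‖x‖ ^ α - b ^ p * ‖y‖ ^ α| ≤
        C * (‖y‖ ^ α * |a - b| * (a ^ (p - 1) + b ^ (p - 1)) + a ^ p * ‖x - y‖ ^ α) := by
  refine ⟨p, by linarith, fun E _ _ a b x y ha hb => ?_⟩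
  have hxα : |‖x‖ ^ α - ‖y‖ ^ α| ≤ ‖x - y‖ ^ α := by
    have h1 : |‖x‖ - ‖y‖| ≤ ‖x - y‖ := abs_norm_sub_norm_le x y
    have h2 : |‖x‖ - ‖y‖| ^ α ≤ ‖x - y‖ ^ α :=
      Real.rpow_le_rpow (abs_nonneg _) h1 hα0
    rw [abs_sub_le_iff]
    constructor
    · exact le_trans (rpow_abs_sub hα0 hα1.le (norm_nonneg x) (norm_nonneg y)) h2
    · refine le_trans (rpow_abs_sub hα0 hα1.le (norm_nonneg y) (norm_nonneg x)) ?_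
      rwa [abs_sub_comm]
  have habp := rpow_abs_sub_p hp.le ha hb
  have hapn : 0 ≤ a ^ p := Real.rpow_nonneg ha p
  have hyn : 0 ≤ ‖y‖ ^ α := Real.rpow_nonneg (norm_nonneg y) α
  have key : |a ^ p * ‖x‖ ^ α - b ^ p * ‖y‖ ^ α| ≤
      a ^ p * |‖x‖ ^ α - ‖y‖ ^ α| + |a ^ p - b ^ p| * ‖y‖ ^ α := by
    have : a ^ p * ‖x‖ ^ α - b ^ p * ‖y‖ ^ α =
        a ^ p * (‖x‖ ^ α - ‖y‖ ^ α) + (a ^ p - b ^ p) * ‖y‖ ^ α := by ring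
    rw [this]
    refine (abs_add_le _ _).trans ?_
    rw [abs_mul, abs_mul, abs_of_nonneg hapn, abs_of_nonneg hyn]
  calc |a ^ p * ‖x‖ ^ α - b ^ p * ‖y‖ ^ α|
      ≤ a ^ p * |‖x‖ ^ α - ‖y‖ ^ α| + |a ^ p - b ^ p| * ‖y‖ ^ α := key
    _ ≤ a ^ p * ‖x - y‖ ^ α + (p * |a - b| * (a ^ (p - 1) + b ^ (p - 1))) * ‖y‖ ^ α := by
        gcongr
    _ ≤ p * (‖y‖ ^ α * |a - b| * (a ^ (p - 1) + b ^ (p - 1)) + a ^ p * ‖x - y‖ ^ α) := by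
        have hxyn : 0 ≤ ‖x - y‖ ^ α := Real.rpow_nonneg (norm_nonneg _) α
        nlinarith [mul_nonneg hapn hxyn]
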